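/- Let Y1, Y0, X be compact metric spaces with Borel σ-algebras, μ1X and μ0X Borel probability measures on Y1 × X and Y0 × X with the same X-marginal, m1 : Y0 × X → (k × d_θ real matrices) continuous, m2 : Y1 × Y0 × X → ℝ^k continuous, and let Θ ⊆ ℝ^{d_θ} be compact and convex with nonempty interior. Then the identified set Θ_I := {θ ∈ Θ : there exists μ ∈ M(μ1X, μ0X) with ∫ (m1(y0, x) θ + m2(y1, y0, x)) dμ = 0} is closed and convex (Theorem 2(ii)). -/

import Mathlib

open MeasureTheory BoundedContinuousFunction NNReal ENNReal Set TopologicalSpace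

noncomputable section

variable {Ω : Type*} [MetricSpace Ω] [CompactSpace Ω]
variable (Λ : (Ω →ᵇ ℝ≥0) →ₗ[ℝ≥0] ℝ≥0)

/-- Monotonicity of a positive linear functional on nonnegative functions. -/
lemma lam_mono {f g : Ω →ᵇ ℝ≥0} (h : ∀ x, f x ≤ g x) : Λ f ≤ Λ g := by
  have hc : Continuous fun x => g x - f x := by fun_prop
  set d : Ω →ᵇ ℝ≥0 := mkOfCompact ⟨fun x => g x - f x, hc⟩ with hd
  have : f + d = g := by
    apply BoundedContinuousFunction.ext; intro x
    simp only [BoundedContinuousFunction.coe_add, Pi.add_apply, hd, mkOfCompact_apply,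
      ContinuousMap.coe_mk]
    exact add_tsub_cancel_of_le (h x)
  calc Λ f ≤ Λ f + Λ d := le_self_add
  _ = Λ (f + d) := (map_add Λ f d).symm
  _ = Λ g := by rw [this]

/-- The Riesz content auxiliary function for bounded continuous functions. -/
def rieszContentAuxB : Compacts Ω → ℝ≥0 := fun K =>
  sInf (Λ '' { f : Ω →ᵇ ℝ≥0 | ∀ x ∈ K, (1 : ℝ≥0) ≤ f x })

lemma rieszContentAuxB_image_nonempty (K : Compacts Ω) :
    (Λ '' { f : Ω →ᵇ ℝ≥0 | ∀ x ∈ K, (1 : ℝ≥0) ≤ f x }).Nonempty :=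
  ⟨Λ 1, 1, fun x _ => by simp, rfl⟩

lemma rieszContentAuxB_mono {K₁ K₂ : Compacts Ω} (h : K₁ ≤ K₂) :
    rieszContentAuxB Λ K₁ ≤ rieszContentAuxB Λ K₂ :=
  csInf_le_csInf (OrderBot.bddBelow _) (rieszContentAuxB_image_nonempty Λ K₂)
    (image_mono fun _ hf x hx => hf x (h hx))

lemma rieszContentAuxB_le {K : Compacts Ω} {f : Ω →ᵇ ℝ≥0} (h : ∀ x ∈ K, (1 : ℝ≥0) ≤ f x) :
    rieszContentAuxB Λ K ≤ Λ f :=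
  csInf_le (OrderBot.bddBelow _) ⟨f, ⟨h, rfl⟩⟩

lemma exists_lt_rieszContentAuxB_add_pos (K : Compacts Ω) {ε : ℝ≥0} (εpos : 0 < ε) :
    ∃ f : Ω →ᵇ ℝ≥0, (∀ x ∈ K, (1 : ℝ≥0) ≤ f x) ∧ Λ f < rieszContentAuxB Λ K + ε := by
  obtain ⟨α, ⟨⟨f, f_hyp⟩, α_hyp⟩⟩ :=
    exists_lt_of_csInf_lt (rieszContentAuxB_image_nonempty Λ K)
      (lt_add_of_pos_right (rieszContentAuxB Λ K) εpos)
  refine ⟨f, f_hyp.left, ?_⟩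
  rw [f_hyp.right]
  exact α_hyp

lemma rieszContentAuxB_sup_le (K1 K2 : Compacts Ω) :
    rieszContentAuxB Λ (K1 ⊔ K2) ≤ rieszContentAuxB Λ K1 + rieszContentAuxB Λ K2 := by
  apply _root_.le_of_forall_pos_le_add
  intro ε εpos
  obtain ⟨f1, f_test_function_K1⟩ := exists_lt_rieszContentAuxB_add_pos Λ K1 (half_pos εpos)
  obtain ⟨f2, f_test_function_K2⟩ := exists_lt_rieszContentAuxB_add_pos Λ K2 (half_pos εpos)
  have f_test_function_union : ∀ x ∈ K1 ⊔ K2, (1 : ℝ≥0) ≤ (f1 + f2) x := by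
    rintro x (x_in_K1 | x_in_K2)
    · exact le_add_right (f_test_function_K1.left x x_in_K1)
    · exact le_add_left (f_test_function_K2.left x x_in_K2)
  apply (rieszContentAuxB_le Λ f_test_function_union).trans (le_of_lt _)
  rw [map_add]
  apply lt_of_lt_of_le (_root_.add_lt_add f_test_function_K1.right f_test_function_K2.right)
    (le_of_eq _)
  rw [add_assoc, add_comm (ε / 2), add_assoc, add_halves ε, add_assoc]

/-- The Riesz content associated to a positive linear functional on a compact metric space. -/
def rieszContentB : Content Ω where
  toFun := rieszContentAuxB Λ
  mono' _ _ h := rieszContentAuxB_mono Λ h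
  sup_le' := rieszContentAuxB_sup_le Λ
  sup_disjoint' K₁ K₂ hdis _ _ := by
    refine le_antisymm (rieszContentAuxB_sup_le Λ K₁ K₂) ?_
    refine le_csInf (rieszContentAuxB_image_nonempty Λ (K₁ ⊔ K₂)) ?_
    rintro - ⟨f, hf, rfl⟩
    obtain ⟨g, hg0, hg1, hg01⟩ :=
      exists_continuous_zero_one_of_isClosed K₂.isCompact.isClosed K₁.isCompact.isClosed
        hdis.symm
    have hgc : Continuous fun x => Real.toNNReal (g x) :=
      continuous_real_toNNReal.comp g.continuous
    set gn : Ω →ᵇ ℝ≥0 := mkOfCompact ⟨fun x => Real.toNNReal (g x), hgc⟩ with hgn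
    have hgn_le_one : ∀ x, gn x ≤ 1 := by
      intro x
      simp only [hgn, mkOfCompact_apply, ContinuousMap.coe_mk]
      exact Real.toNNReal_le_one.mpr (hg01 x).2
    have h1c : Continuous fun x => f x * gn x := by fun_prop
    have h2c : Continuous fun x => f x * (1 - gn x) := by fun_prop
    set h₁ : Ω →ᵇ ℝ≥0 := mkOfCompact ⟨fun x => f x * gn x, h1c⟩ with hh₁
    set h₂ : Ω →ᵇ ℝ≥0 := mkOfCompact ⟨fun x => f x * (1 - gn x), h2c⟩ with hh₂
    have hsum : h₁ + h₂ = f := by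
      apply BoundedContinuousFunction.ext; intro x
      simp only [BoundedContinuousFunction.coe_add, Pi.add_apply, hh₁, hh₂, mkOfCompact_apply,
        ContinuousMap.coe_mk]
      rw [← mul_add, add_tsub_cancel_of_le (hgn_le_one x), mul_one]
    have e₁ : rieszContentAuxB Λ K₁ ≤ Λ h₁ := by
      apply rieszContentAuxB_le Λ
      intro x hx
      have hgx : gn x = 1 := by
        simp only [hgn, mkOfCompact_apply, ContinuousMap.coe_mk]
        rw [hg1 hx]; simp
      simp only [hh₁, mkOfCompact_apply, ContinuousMap.coe_mk, hgx, mul_one]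
      exact hf x (Or.inl hx)
    have e₂ : rieszContentAuxB Λ K₂ ≤ Λ h₂ := by
      apply rieszContentAuxB_le Λ
      intro x hx
      have hgx : gn x = 0 := by
        simp only [hgn, mkOfCompact_apply, ContinuousMap.coe_mk]
        rw [hg0 hx]; simp
      simp only [hh₂, mkOfCompact_apply, ContinuousMap.coe_mk, hgx, tsub_zero, mul_one]
      exact hf x (Or.inr hx)
    calc rieszContentAuxB Λ K₁ + rieszContentAuxB Λ K₂ ≤ Λ h₁ + Λ h₂ := add_le_add e₁ e₂
    _ = Λ (h₁ + h₂) := (map_add Λ h₁ h₂).symm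
    _ = Λ f := by rw [hsum]

/-- The Riesz content is regular. -/
lemma rieszContent_regular : (rieszContentB Λ).ContentRegular := by
  intro K
  refine le_antisymm (le_iInf₂ fun K' hK' => ?_) ?_
  · exact ENNReal.coe_le_coe.mpr
      (rieszContentAuxB_mono Λ (hK'.trans interior_subset))
  · refine ENNReal.le_of_forall_pos_le_add fun ε hε _ => ?_
    set A := rieszContentAuxB Λ K with hA
    obtain ⟨f, hfK, hfΛ⟩ := exists_lt_rieszContentAuxB_add_pos Λ K (half_pos hε)
    set t : ℝ≥0 := (A + ε / 2) / (A + ε) with ht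
    have hden : (0 : ℝ≥0) < A + ε := lt_of_lt_of_le hε le_add_self
    have hnum : (0 : ℝ≥0) < A + ε / 2 := lt_of_lt_of_le (half_pos hε) le_add_self
    have ht1 : t < 1 := by
      rw [ht, div_lt_one hden]
      exact add_lt_add_right (NNReal.half_lt_self hε.ne') A
    have ht0 : 0 < t := div_pos hnum hden
    have hKcl : IsClosed {x | t ≤ f x} := isClosed_le continuous_const f.continuous
    set K' : Compacts Ω := ⟨{x | t ≤ f x}, hKcl.isCompact⟩ with hK'
    have hsub : (K : Set Ω) ⊆ interior (K' : Set Ω) := by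
      have hopen : IsOpen {x | t < f x} := isOpen_lt continuous_const f.continuous
      have h1 : (K : Set Ω) ⊆ {x | t < f x} := fun x hx => lt_of_lt_of_le ht1 (hfK x hx)
      have h2 : {x | t < f x} ⊆ (K' : Set Ω) := fun x hx => show t ≤ f x from le_of_lt hx
      exact h1.trans (interior_maximal h2 hopen)
    refine le_trans (iInf₂_le_of_le K' hsub ?_) le_rfl
    have htest : rieszContentAuxB Λ K' ≤ t⁻¹ * Λ f := by
      have : rieszContentAuxB Λ K' ≤ Λ (t⁻¹ • f) := by
        apply rieszContentAuxB_le Λ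
        intro x hx
        simp only [BoundedContinuousFunction.coe_smul, Pi.smul_apply, smul_eq_mul]
        calc (1 : ℝ≥0) = t⁻¹ * t := (inv_mul_cancel₀ ht0.ne').symm
        _ ≤ t⁻¹ * f x := mul_le_mul_right hx _
      rwa [LinearMap.map_smul, smul_eq_mul] at this
    have hfin : t⁻¹ * Λ f ≤ A + ε := by
      have h1 : t⁻¹ * Λ f ≤ t⁻¹ * (A + ε / 2) := mul_le_mul_right hfΛ.le _
      have h2 : t⁻¹ * (A + ε / 2) = A + ε := by
        rw [ht, inv_div, div_mul_cancel₀ _ hnum.ne']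
      exact h1.trans h2.le
    calc ((rieszContentAuxB Λ K' : ℝ≥0∞)) ≤ ((t⁻¹ * Λ f : ℝ≥0) : ℝ≥0∞) := ENNReal.coe_le_coe.mpr htest
    _ ≤ ((A + ε : ℝ≥0) : ℝ≥0∞) := ENNReal.coe_le_coe.mpr hfin
    _ = (A : ℝ≥0∞) + ε := by push_cast; ring

lemma ennreal_le_of_forall_nat_mul {x y : ℝ≥0∞} (A : ℝ≥0)
    (h : ∀ N : ℕ, 0 < N → (N : ℝ≥0∞) * x ≤ (A : ℝ≥0∞) + N * y) : x ≤ y := by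
  by_cases hy : y = ∞
  · simp [hy]
  refine ENNReal.le_of_forall_pos_le_add fun ε hε _ => ?_
  obtain ⟨N, hN⟩ := exists_nat_gt ((A / ε : ℝ≥0) : ℝ)
  have hNpos : 0 < N := by
    by_contra hc
    push_neg at hc
    interval_cases N
    simpa using lt_of_le_of_lt (A / ε).coe_nonneg hN
  have hAN : (A : ℝ≥0) ≤ N * ε := by
    have : (A / ε : ℝ≥0) < (N : ℝ≥0) := by exact_mod_cast hN
    rw [div_lt_iff₀ hε] at this
    exact this.le.trans (le_of_eq rfl)
  have hkey : (N : ℝ≥0∞) * x ≤ (N : ℝ≥0∞) * (y + ε) := by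
    calc (N : ℝ≥0∞) * x ≤ (A : ℝ≥0∞) + N * y := h N hNpos
    _ ≤ (N : ℝ≥0∞) * ε + N * y := by
        apply add_le_add_left
        calc (A : ℝ≥0∞) ≤ ((N * ε : ℝ≥0) : ℝ≥0∞) := ENNReal.coe_le_coe.mpr hAN
        _ = (N : ℝ≥0∞) * ε := by push_cast; ring
    _ = (N : ℝ≥0∞) * (y + ε) := by ring
  have hN0 : (N : ℝ≥0∞) ≠ 0 := by exact_mod_cast hNpos.ne'
  have hNt : (N : ℝ≥0∞) ≠ ∞ := ENNReal.natCast_ne_top N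
  exact (ENNReal.mul_le_mul_iff_right hN0 hNt).mp hkey

variable [MeasurableSpace Ω] [BorelSpace Ω]

/-- The Riesz measure associated to a positive linear functional. -/
def rieszMeasure : Measure Ω := (rieszContentB Λ).measure

lemma lintegral_rieszMeasure (f : Ω →ᵇ ℝ≥0) :
    ∫⁻ x, (f x : ℝ≥0∞) ∂(rieszMeasure Λ) = (Λ f : ℝ≥0∞) := by
  classical
  set μ : Measure Ω := rieszMeasure Λ with hμdef
  set C : ℝ≥0 := nndist f 0 with hC
  have hfC : ∀ x, f x ≤ C := by
    intro x
    have := BoundedContinuousFunction.nndist_coe_le_nndist (f := f) (g := 0) x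
    simpa using this
  have hfm : Measurable fun x => (f x : ℝ≥0∞) :=
    (ENNReal.continuous_coe.comp f.continuous).measurable
  set I : ℝ≥0∞ := ∫⁻ x, (f x : ℝ≥0∞) ∂μ with hI
  set Atop : ℝ≥0 := rieszContentAuxB Λ ⊤ with hAtop
  have key : ∀ N : ℕ, 0 < N →
      (N : ℝ≥0∞) * (Λ f : ℝ≥0∞) ≤ (Atop : ℝ≥0∞) + N * I ∧
      (N : ℝ≥0∞) * I ≤ (Atop : ℝ≥0∞) + N * (Λ f : ℝ≥0∞) := by
    intro N hN
    have hN0 : (N : ℝ≥0) ≠ 0 := Nat.cast_ne_zero.mpr hN.ne'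
    have hNpos' : (0 : ℝ≥0) < (N : ℝ≥0) := pos_iff_ne_zero.mpr hN0
    set m : ℕ := ⌊(N : ℝ≥0) * C⌋₊ with hm
    set M : ℕ := m + 1 with hM
    set Knat : ℕ → Set Ω := fun i => {x | (i : ℝ≥0) / (N : ℝ≥0) ≤ f x} with hKnat
    have hKcl : ∀ i, IsClosed (Knat i) := fun i =>
      isClosed_le continuous_const f.continuous
    have hKmeas : ∀ i, MeasurableSet (Knat i) := fun i => (hKcl i).measurableSet
    set Kcpt : ℕ → Compacts Ω := fun i => ⟨Knat i, (hKcl i).isCompact⟩ with hKcpt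
    have hdivmono : ∀ i j : ℕ, i ≤ j → (i : ℝ≥0) / (N : ℝ≥0) ≤ (j : ℝ≥0) / (N : ℝ≥0) := by
      intro i j hij
      rw [div_eq_mul_inv, div_eq_mul_inv]
      exact mul_le_mul_left (by exact_mod_cast hij) _
    -- the band functions
    have hbc : ∀ i : ℕ, Continuous fun x =>
        min (f x) ((((i+1) : ℕ) : ℝ≥0) / N) - min (f x) ((i : ℝ≥0) / N) :=
      fun i => (f.continuous.min continuous_const).sub (f.continuous.min continuous_const)
    set b : ℕ → (Ω →ᵇ ℝ≥0) := fun i => mkOfCompact ⟨_, hbc i⟩ with hb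
    have hb_apply : ∀ i x, b i x
        = min (f x) ((((i+1) : ℕ) : ℝ≥0) / N) - min (f x) ((i : ℝ≥0) / N) := fun i x => rfl
    -- telescoping sum
    have hsum : ∑ i ∈ Finset.range M, b i = f := by
      apply BoundedContinuousFunction.ext; intro x
      have hcoe : (∑ i ∈ Finset.range M, b i) x = ∑ i ∈ Finset.range M, b i x := by
        induction (Finset.range M) using Finset.induction with
        | empty => simp
        | insert _ _ hni ih => simp [Finset.sum_insert hni, ih]
      rw [hcoe]
      have hmono : Monotone fun i : ℕ => min (f x) ((i : ℝ≥0) / N) := fun i j hij =>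
        min_le_min le_rfl (hdivmono i j hij)
      have ht := Finset.sum_range_tsub hmono M
      simp only [hb_apply]
      rw [ht]
      have h0 : min (f x) (((0:ℕ) : ℝ≥0) / N) = 0 := by simp
      have hMN : f x ≤ ((M:ℕ) : ℝ≥0) / N := by
        rw [le_div_iff₀ hNpos']
        calc f x * N ≤ C * N := mul_le_mul_left (hfC x) _
        _ = N * C := mul_comm _ _
        _ ≤ ((M:ℕ) : ℝ≥0) := by
            have h := (Nat.lt_floor_add_one ((N : ℝ≥0) * C)).le
            rw [hM]
            push_cast
            push_cast at h
            exact h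
      rw [h0, tsub_zero, min_eq_left hMN]
    -- band bounds
    have hb_le : ∀ i x, b i x ≤ 1 / N := by
      intro i x
      rw [hb_apply, tsub_le_iff_right]
      rcases le_total (f x) ((i : ℝ≥0) / N) with h | h
      · calc min (f x) ((((i+1) : ℕ) : ℝ≥0) / N) ≤ f x := min_le_left _ _
        _ = min (f x) ((i : ℝ≥0) / N) := (min_eq_left h).symm
        _ ≤ 1 / N + min (f x) ((i : ℝ≥0) / N) := le_add_self
      · calc min (f x) ((((i+1) : ℕ) : ℝ≥0) / N) ≤ (((i+1) : ℕ) : ℝ≥0) / N := min_le_right _ _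
        _ = 1 / N + (i : ℝ≥0) / N := by push_cast; rw [add_div, add_comm]
        _ = 1 / N + min (f x) ((i : ℝ≥0) / N) := by rw [min_eq_right h]
    have hb_zero : ∀ i x, x ∉ Knat i → b i x = 0 := by
      intro i x hx
      simp only [hKnat, mem_setOf_eq, not_le] at hx
      rw [hb_apply, min_eq_left (hx.le.trans (hdivmono i (i+1) (Nat.le_succ i))),
        min_eq_left hx.le, tsub_self]
    have hb_one : ∀ i x, x ∈ Knat (i + 1) → 1 / N ≤ b i x := by
      intro i x hx
      have hx' : (((i+1) : ℕ) : ℝ≥0) / N ≤ f x := hx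
      have hii : (i : ℝ≥0) / N ≤ f x := le_trans (hdivmono i (i+1) (Nat.le_succ i)) hx'
      rw [hb_apply, min_eq_right hx', min_eq_right hii]
      have : (((i+1) : ℕ) : ℝ≥0) / N = (i : ℝ≥0) / N + 1 / N := by push_cast; rw [add_div]
      rw [this, add_comm, add_tsub_cancel_right]
    -- functional side
    have hΛsum : Λ f = ∑ i ∈ Finset.range M, Λ (b i) := by rw [← hsum, map_sum]
    have hαb : ∀ i, (N : ℝ≥0) * Λ (b i) ≤ rieszContentAuxB Λ (Kcpt i) := by
      intro i
      have h1 : Λ ((N : ℝ≥0) • b i) ≤ rieszContentAuxB Λ (Kcpt i) := by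
        refine le_csInf (rieszContentAuxB_image_nonempty Λ (Kcpt i)) ?_
        rintro y ⟨h, hh, rfl⟩
        refine lam_mono Λ fun x => ?_
        simp only [BoundedContinuousFunction.coe_smul, Pi.smul_apply, smul_eq_mul]
        by_cases hx : x ∈ Knat i
        · calc (N:ℝ≥0) * b i x ≤ (N:ℝ≥0) * (1/N) := mul_le_mul_right (hb_le i x) _
          _ = 1 := by rw [mul_one_div, div_self hN0]
          _ ≤ h x := hh x hx
        · rw [hb_zero i x hx, mul_zero]; exact zero_le
      rwa [LinearMap.map_smul, smul_eq_mul] at h1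
    have hK1b : ∀ i, rieszContentAuxB Λ (Kcpt (i+1)) ≤ (N : ℝ≥0) * Λ (b i) := by
      intro i
      have h1 : rieszContentAuxB Λ (Kcpt (i+1)) ≤ Λ ((N:ℝ≥0) • b i) := by
        apply rieszContentAuxB_le Λ
        intro x hx
        simp only [BoundedContinuousFunction.coe_smul, Pi.smul_apply, smul_eq_mul]
        calc (1:ℝ≥0) = N * (1/N) := by rw [mul_one_div, div_self hN0]
        _ ≤ N * b i x := mul_le_mul_right (hb_one i x hx) _
      rwa [LinearMap.map_smul, smul_eq_mul] at h1
    have hμKα : ∀ i, μ (Knat i) = (rieszContentAuxB Λ (Kcpt i) : ℝ≥0∞) := fun i =>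
      Content.measure_eq_content_of_regular (rieszContentB Λ) (rieszContent_regular Λ) (Kcpt i)
    have hμtop : μ (Knat 0) ≤ (Atop : ℝ≥0∞) := by
      rw [hμKα 0]
      exact ENNReal.coe_le_coe.mpr (rieszContentAuxB_mono Λ le_top)
    -- integral side
    have hind : ∀ i, ∫⁻ x, (Knat i).indicator (fun _ => (1:ℝ≥0∞)) x ∂μ = μ (Knat i) := by
      intro i
      exact lintegral_indicator_one (μ := μ) (hKmeas i)
    have hmeas_ind : ∀ i, Measurable ((Knat i).indicator (fun _ => (1:ℝ≥0∞))) := fun i =>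
      measurable_const.indicator (hKmeas i)
    have hcard : ∀ (P : ℕ → Prop) [DecidablePred P],
        ∑ i ∈ Finset.range M, (if P i then (1:ℝ≥0∞) else 0)
          = (((Finset.range M).filter P).card : ℝ≥0∞) := by
      intro P _
      rw [Finset.card_filter]
      push_cast
      rfl
    have hpt_up : ∀ x, (N : ℝ≥0∞) * (f x : ℝ≥0∞)
        ≤ ∑ i ∈ Finset.range M, (Knat i).indicator (fun _ => (1:ℝ≥0∞)) x := by
      intro x
      have hrw : ∀ i, (Knat i).indicator (fun _ => (1:ℝ≥0∞)) x
          = if x ∈ Knat i then (1:ℝ≥0∞) else 0 := fun i => Set.indicator_apply _ _ _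
      simp only [hrw]
      rw [hcard]
      have hsubset : Finset.range (⌊(N:ℝ≥0) * f x⌋₊ + 1)
          ⊆ (Finset.range M).filter (fun i => x ∈ Knat i) := by
        intro i hi
        rw [Finset.mem_range] at hi
        have hi' : i ≤ ⌊(N:ℝ≥0) * f x⌋₊ := Nat.lt_succ_iff.mp hi
        refine Finset.mem_filter.mpr ⟨Finset.mem_range.mpr ?_, ?_⟩
        · have hfl : ⌊(N:ℝ≥0) * f x⌋₊ ≤ m := Nat.floor_le_floor (mul_le_mul_right (hfC x) _)
          omega
        · show (i:ℝ≥0) / N ≤ f x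
          rw [div_le_iff₀ hNpos']
          calc (i:ℝ≥0) ≤ (⌊(N:ℝ≥0) * f x⌋₊ : ℝ≥0) := by exact_mod_cast hi'
          _ ≤ (N:ℝ≥0) * f x := Nat.floor_le (zero_le)
          _ = f x * N := mul_comm _ _
      have hcardge : ⌊(N:ℝ≥0) * f x⌋₊ + 1
          ≤ ((Finset.range M).filter (fun i => x ∈ Knat i)).card := by
        have := Finset.card_le_card hsubset
        rwa [Finset.card_range] at this
      calc (N : ℝ≥0∞) * (f x : ℝ≥0∞) = (((N:ℝ≥0) * f x : ℝ≥0) : ℝ≥0∞) := by push_cast; ring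
      _ ≤ ((⌊(N:ℝ≥0) * f x⌋₊ + 1 : ℕ) : ℝ≥0∞) := by
          have := (Nat.lt_floor_add_one ((N:ℝ≥0) * f x)).le
          exact_mod_cast ENNReal.coe_le_coe.mpr (by exact_mod_cast this)
      _ ≤ _ := by exact_mod_cast hcardge
    have hpt_down : ∀ x, (∑ i ∈ Finset.range M, (Knat (i+1)).indicator (fun _ => (1:ℝ≥0∞)) x)
        ≤ (N:ℝ≥0∞) * (f x : ℝ≥0∞) := by
      intro x
      have hrw : ∀ i, (Knat (i+1)).indicator (fun _ => (1:ℝ≥0∞)) x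
          = if x ∈ Knat (i+1) then (1:ℝ≥0∞) else 0 := fun i => Set.indicator_apply _ _ _
      simp only [hrw]
      rw [hcard]
      have hsubset : (Finset.range M).filter (fun i => x ∈ Knat (i+1))
          ⊆ Finset.range ⌊(N:ℝ≥0) * f x⌋₊ := by
        intro i hi
        obtain ⟨-, hmem⟩ := Finset.mem_filter.mp hi
        have h1 : (((i+1) : ℕ) : ℝ≥0) / N ≤ f x := hmem
        rw [div_le_iff₀ hNpos'] at h1
        have h2 : i + 1 ≤ ⌊(N:ℝ≥0) * f x⌋₊ :=
          Nat.le_floor (by rw [mul_comm]; exact_mod_cast h1)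
        rw [Finset.mem_range]
        omega
      have hcardle := Finset.card_le_card hsubset
      rw [Finset.card_range] at hcardle
      calc (((Finset.range M).filter (fun i => x ∈ Knat (i+1))).card : ℝ≥0∞)
          ≤ ((⌊(N:ℝ≥0) * f x⌋₊ : ℕ) : ℝ≥0∞) := by exact_mod_cast hcardle
      _ ≤ (((N:ℝ≥0) * f x : ℝ≥0) : ℝ≥0∞) := by
          exact_mod_cast ENNReal.coe_le_coe.mpr (by exact_mod_cast Nat.floor_le (zero_le (a := (N:ℝ≥0) * f x)))
      _ = (N:ℝ≥0∞) * (f x : ℝ≥0∞) := by push_cast; ring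
    have hint_up : (N:ℝ≥0∞) * I ≤ ∑ i ∈ Finset.range M, μ (Knat i) := by
      rw [hI, ← lintegral_const_mul _ hfm]
      calc ∫⁻ x, (N:ℝ≥0∞) * (f x : ℝ≥0∞) ∂μ
          ≤ ∫⁻ x, ∑ i ∈ Finset.range M, (Knat i).indicator (fun _ => (1:ℝ≥0∞)) x ∂μ :=
            lintegral_mono hpt_up
      _ = ∑ i ∈ Finset.range M, ∫⁻ x, (Knat i).indicator (fun _ => (1:ℝ≥0∞)) x ∂μ :=
            lintegral_finset_sum _ (fun i _ => hmeas_ind i)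
      _ = ∑ i ∈ Finset.range M, μ (Knat i) := Finset.sum_congr rfl fun i _ => hind i
    have hint_down : ∑ i ∈ Finset.range M, μ (Knat (i+1)) ≤ (N:ℝ≥0∞) * I := by
      rw [hI, ← lintegral_const_mul _ hfm]
      calc ∑ i ∈ Finset.range M, μ (Knat (i+1))
          = ∑ i ∈ Finset.range M, ∫⁻ x, (Knat (i+1)).indicator (fun _ => (1:ℝ≥0∞)) x ∂μ :=
            Finset.sum_congr rfl fun i _ => (hind (i+1)).symm
      _ = ∫⁻ x, ∑ i ∈ Finset.range M, (Knat (i+1)).indicator (fun _ => (1:ℝ≥0∞)) x ∂μ :=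
            (lintegral_finset_sum _ (fun i _ => hmeas_ind (i+1))).symm
      _ ≤ ∫⁻ x, (N:ℝ≥0∞) * (f x : ℝ≥0∞) ∂μ := lintegral_mono hpt_down
    have hshift : ∀ u : ℕ → ℝ≥0∞,
        ∑ i ∈ Finset.range M, u i ≤ u 0 + ∑ i ∈ Finset.range M, u (i+1) := by
      intro u
      rw [hM, Finset.sum_range_succ', add_comm]
      exact add_le_add_right
        (Finset.sum_le_sum_of_subset (Finset.range_subset_range.mpr (Nat.le_succ m))) _
    constructor
    · calc (N:ℝ≥0∞) * (Λ f : ℝ≥0∞)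
          = ∑ i ∈ Finset.range M, (N:ℝ≥0∞) * (Λ (b i) : ℝ≥0∞) := by
            rw [hΛsum]; push_cast; rw [Finset.mul_sum]
      _ ≤ ∑ i ∈ Finset.range M, (rieszContentAuxB Λ (Kcpt i) : ℝ≥0∞) := by
            refine Finset.sum_le_sum fun i _ => ?_
            calc (N:ℝ≥0∞) * (Λ (b i) : ℝ≥0∞) = (((N:ℝ≥0) * Λ (b i) : ℝ≥0) : ℝ≥0∞) := by
                  push_cast; ring
            _ ≤ _ := ENNReal.coe_le_coe.mpr (hαb i)
      _ = ∑ i ∈ Finset.range M, μ (Knat i) := Finset.sum_congr rfl fun i _ => (hμKα i).symm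
      _ ≤ μ (Knat 0) + ∑ i ∈ Finset.range M, μ (Knat (i+1)) := hshift _
      _ ≤ (Atop:ℝ≥0∞) + (N:ℝ≥0∞) * I := add_le_add hμtop hint_down
    · calc (N:ℝ≥0∞) * I ≤ ∑ i ∈ Finset.range M, μ (Knat i) := hint_up
      _ ≤ μ (Knat 0) + ∑ i ∈ Finset.range M, μ (Knat (i+1)) := hshift _
      _ ≤ (Atop:ℝ≥0∞) + ∑ i ∈ Finset.range M, (N:ℝ≥0∞) * (Λ (b i) : ℝ≥0∞) := by
            refine add_le_add hμtop (Finset.sum_le_sum fun i _ => ?_)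
            rw [hμKα (i+1)]
            calc ((rieszContentAuxB Λ (Kcpt (i+1)) : ℝ≥0) : ℝ≥0∞)
                ≤ (((N:ℝ≥0) * Λ (b i) : ℝ≥0) : ℝ≥0∞) := ENNReal.coe_le_coe.mpr (hK1b i)
            _ = (N:ℝ≥0∞) * (Λ (b i) : ℝ≥0∞) := by push_cast; ring
      _ = (Atop:ℝ≥0∞) + (N:ℝ≥0∞) * (Λ f : ℝ≥0∞) := by
            rw [hΛsum]; push_cast; rw [Finset.mul_sum]
  exact le_antisymm
    (ennreal_le_of_forall_nat_mul Atop fun N hN => (key N hN).2)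
    (ennreal_le_of_forall_nat_mul Atop fun N hN => (key N hN).1)

lemma rieszMeasure_univ : (rieszMeasure Λ) univ = (Λ 1 : ℝ≥0∞) := by
  have h := lintegral_rieszMeasure Λ 1
  simpa using h

end

noncomputable section CompactPM

open Topology

variable (Ω : Type*) [MetricSpace Ω] [CompactSpace Ω] [MeasurableSpace Ω] [BorelSpace Ω]

/-- The evaluation map from probability measures into the product space. -/
def pmEval : ProbabilityMeasure Ω → ((Ω →ᵇ ℝ≥0) → ℝ≥0) :=
  fun ν f => ν.toFiniteMeasure.testAgainstNN f

lemma pmEval_isEmbedding : IsEmbedding (pmEval Ω) := by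
  have e1 : IsEmbedding (ProbabilityMeasure.toFiniteMeasure (Ω := Ω)) :=
    ProbabilityMeasure.toFiniteMeasure_isEmbedding Ω
  have e2 : IsEmbedding (FiniteMeasure.toWeakDualBCNN (Ω := Ω)) :=
    FiniteMeasure.isEmbedding_toWeakDualBCNN Ω
  have hinj : Function.Injective ⇑(topDualPairing ℝ≥0 (Ω →ᵇ ℝ≥0)) :=
    fun L1 L2 h => ContinuousLinearMap.coe_injective h
  have e3 : IsEmbedding fun (L : WeakDual ℝ≥0 (Ω →ᵇ ℝ≥0)) (f : Ω →ᵇ ℝ≥0) => L f :=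
    WeakBilin.isEmbedding hinj
  exact (e3.comp e2).comp e1

/-- The set of normalized positive linear functionals in the product space. -/
def pmSet : Set ((Ω →ᵇ ℝ≥0) → ℝ≥0) :=
  {φ | (∀ f g, φ (f + g) = φ f + φ g) ∧ (∀ (c : ℝ≥0) f, φ (c • f) = c * φ f) ∧
    φ 1 = 1 ∧ ∀ f, φ f ≤ nndist f 0}

lemma pmSet_isClosed : IsClosed (pmSet Ω) := by
  have h1 : IsClosed {φ : (Ω →ᵇ ℝ≥0) → ℝ≥0 | ∀ f g, φ (f + g) = φ f + φ g} := by
    rw [setOf_forall]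
    refine isClosed_iInter fun f => ?_
    rw [setOf_forall]
    exact isClosed_iInter fun g =>
      isClosed_eq (continuous_apply (f + g)) ((continuous_apply f).add (continuous_apply g))
  have h2 : IsClosed {φ : (Ω →ᵇ ℝ≥0) → ℝ≥0 | ∀ (c : ℝ≥0) f, φ (c • f) = c * φ f} := by
    rw [setOf_forall]
    refine isClosed_iInter fun c => ?_
    rw [setOf_forall]
    exact isClosed_iInter fun f =>
      isClosed_eq (continuous_apply (c • f)) (continuous_const.mul (continuous_apply f))
  have h3 : IsClosed {φ : (Ω →ᵇ ℝ≥0) → ℝ≥0 | φ 1 = 1} :=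
    isClosed_eq (continuous_apply _) continuous_const
  have h4 : IsClosed {φ : (Ω →ᵇ ℝ≥0) → ℝ≥0 | ∀ f, φ f ≤ nndist f 0} := by
    rw [setOf_forall]
    exact isClosed_iInter fun f => isClosed_le (continuous_apply _) continuous_const
  have hset : pmSet Ω = ({φ : (Ω →ᵇ ℝ≥0) → ℝ≥0 | ∀ f g, φ (f + g) = φ f + φ g}
      ∩ {φ | ∀ (c : ℝ≥0) f, φ (c • f) = c * φ f})
      ∩ ({φ | φ 1 = 1} ∩ {φ | ∀ f, φ f ≤ nndist f 0}) := by
    ext φ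
    simp only [pmSet, Set.mem_setOf_eq, Set.mem_inter_iff]
    tauto
  rw [hset]
  exact (h1.inter h2).inter (h3.inter h4)

lemma pmSet_isCompact : IsCompact (pmSet Ω) := by
  have hbox : IsCompact (Set.pi Set.univ fun f : Ω →ᵇ ℝ≥0 => Icc (0 : ℝ≥0) (nndist f 0)) :=
    isCompact_univ_pi fun f => isCompact_Icc
  refine hbox.of_isClosed_subset (pmSet_isClosed Ω) ?_
  intro φ hφ
  intro f _
  exact ⟨zero_le, hφ.2.2.2 f⟩

lemma pmEval_range : Set.range (pmEval Ω) = pmSet Ω := by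
  apply Set.eq_of_subset_of_subset
  · rintro - ⟨ν, rfl⟩
    refine ⟨fun f g => ν.toFiniteMeasure.testAgainstNN_add f g,
      fun c f => by
        simpa [smul_eq_mul, pmEval] using ν.toFiniteMeasure.testAgainstNN_smul c f, ?_, fun f => ?_⟩
    · simp [pmEval, FiniteMeasure.testAgainstNN_one]
    · have h := ν.toFiniteMeasure.testAgainstNN_lipschitz_estimate f 0
      simpa [FiniteMeasure.testAgainstNN_zero, pmEval] using h
  · intro φ hφ
    obtain ⟨hadd, hsmul, hone, -⟩ := hφ
    set Λ : (Ω →ᵇ ℝ≥0) →ₗ[ℝ≥0] ℝ≥0 :=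
      { toFun := φ
        map_add' := fun f g => hadd f g
        map_smul' := fun c f => by simpa [smul_eq_mul] using hsmul c f } with hΛ
    have hprob : IsProbabilityMeasure (rieszMeasure Λ) := by
      constructor
      rw [rieszMeasure_univ]
      have : Λ 1 = 1 := hone
      rw [this]
      simp
    refine ⟨(⟨rieszMeasure Λ, hprob⟩ : ProbabilityMeasure Ω), ?_⟩
    funext f
    have hrep := lintegral_rieszMeasure Λ f
    show (∫⁻ ω, (f ω : ℝ≥0∞) ∂(rieszMeasure Λ)).toNNReal = φ f
    rw [hrep]
    simp only [ENNReal.toNNReal_coe]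
    rfl

instance probabilityMeasure_compactSpace : CompactSpace (ProbabilityMeasure Ω) := by
  constructor
  rw [(pmEval_isEmbedding Ω).isCompact_iff, Set.image_univ, pmEval_range]
  exact pmSet_isCompact Ω

end CompactPM

section VecInt

open Topology

variable {Ω : Type*} [MetricSpace Ω] [CompactSpace Ω] [MeasurableSpace Ω] [BorelSpace Ω]

lemma integrable_of_continuous_compact {E : Type*} [NormedAddCommGroup E]
    [SecondCountableTopology E] [MeasurableSpace E] [BorelSpace E]
    {h : Ω → E} (hh : Continuous h) (μ : Measure Ω) [IsFiniteMeasure μ] :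
    Integrable h μ := by
  have := (BoundedContinuousFunction.mkOfCompact ⟨h, hh⟩).integrable μ
  exact this

lemma continuous_integral_vector {k : ℕ} {h : Ω → EuclideanSpace ℝ (Fin k)}
    (hh : Continuous h) :
    Continuous fun ν : ProbabilityMeasure Ω => ∫ x, h x ∂(ν : Measure Ω) := by
  rw [← Homeomorph.comp_continuous_iff (EuclideanSpace.equiv (Fin k) ℝ).toHomeomorph]
  apply continuous_pi
  intro i
  have hcont_i : Continuous fun x => h x i :=
    (EuclideanSpace.proj (𝕜 := ℝ) i).continuous.comp hh
  have hs := ProbabilityMeasure.continuous_integral_boundedContinuousFunction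
    (BoundedContinuousFunction.mkOfCompact ⟨fun x => h x i, hcont_i⟩)
  have heq : (fun ν : ProbabilityMeasure Ω =>
      ((EuclideanSpace.equiv (Fin k) ℝ).toHomeomorph ∘
        fun ν : ProbabilityMeasure Ω => ∫ x, h x ∂(ν : Measure Ω)) ν i)
      = fun ν : ProbabilityMeasure Ω =>
        ∫ x, (BoundedContinuousFunction.mkOfCompact ⟨fun x => h x i, hcont_i⟩) x
          ∂(ν : Measure Ω) := by
    funext ν
    have hint : Integrable h (ν : Measure Ω) := integrable_of_continuous_compact hh _
    have hcc := (EuclideanSpace.proj (𝕜 := ℝ) i).integral_comp_comm hint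
    exact hcc.symm
  exact heq ▸ hs

end VecInt

lemma marginal_closed {W Z : Type*} [MetricSpace W] [MeasurableSpace W] [BorelSpace W]
    [MetricSpace Z] [MeasurableSpace Z] [BorelSpace Z]
    (π : W → Z) (hπ : Continuous π) (μZ : Measure Z) (hμZ : IsProbabilityMeasure μZ) :
    IsClosed {ν : ProbabilityMeasure W | ν.toMeasure.map π = μZ} := by
  have heq : {ν : ProbabilityMeasure W | ν.toMeasure.map π = μZ}
      = (fun ν : ProbabilityMeasure W =>
          ν.map hπ.measurable.aemeasurable) ⁻¹' {(⟨μZ, hμZ⟩ : ProbabilityMeasure Z)} := by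
    ext ν
    simp only [Set.mem_setOf_eq, Set.mem_preimage, Set.mem_singleton_iff]
    constructor
    · intro h
      apply MeasureTheory.ProbabilityMeasure.toMeasure_injective
      rw [ProbabilityMeasure.toMeasure_map]
      exact h
    · intro h
      have h2 := congrArg ProbabilityMeasure.toMeasure h
      rwa [ProbabilityMeasure.toMeasure_map] at h2
  rw [heq]
  exact isClosed_singleton.preimage (ProbabilityMeasure.continuous_map hπ)

/-- The set `M(μ1X, μ0X)` of probability measures on `Y1 × Y0 × X` whose projection on
`(Y1, X)` is `μ1X` and whose projection on `(Y0, X)` is `μ0X`. -/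
def MSet {Y1 Y0 X : Type*} [MeasurableSpace Y1] [MeasurableSpace Y0] [MeasurableSpace X]
    (μ1X : Measure (Y1 × X)) (μ0X : Measure (Y0 × X)) :
    Set (Measure (Y1 × Y0 × X)) :=
  {μ | IsProbabilityMeasure μ ∧
    μ.map (fun p => (p.1, p.2.2)) = μ1X ∧ μ.map (fun p => (p.2.1, p.2.2)) = μ0X}

/-- Theorem 2(ii): for affine moment functions, the identified set
`Θ_I = {θ ∈ Θ : ∃ μ ∈ M(μ1X, μ0X), ∫ (m1(y0,x) θ + m2(y1,y0,x)) dμ = 0}` is closed and convex,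
for `Θ` compact, convex and with nonempty interior. -/
theorem affine_identified_set_closed_convex
    {Y1 Y0 X : Type*}
    [MetricSpace Y1] [CompactSpace Y1] [MeasurableSpace Y1] [BorelSpace Y1]
    [MetricSpace Y0] [CompactSpace Y0] [MeasurableSpace Y0] [BorelSpace Y0]
    [MetricSpace X] [CompactSpace X] [MeasurableSpace X] [BorelSpace X]
    (μ1X : Measure (Y1 × X)) (μ0X : Measure (Y0 × X))
    [IsProbabilityMeasure μ1X] [IsProbabilityMeasure μ0X]
    (hmarg : μ1X.map Prod.snd = μ0X.map Prod.snd)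
    {k dθ : ℕ}
    (m1 : Y0 × X → (EuclideanSpace ℝ (Fin dθ) →L[ℝ] EuclideanSpace ℝ (Fin k)))
    (hm1 : Continuous m1)
    (m2 : Y1 × Y0 × X → EuclideanSpace ℝ (Fin k)) (hm2 : Continuous m2)
    (Θ : Set (EuclideanSpace ℝ (Fin dθ)))
    (hΘcomp : IsCompact Θ) (hΘconv : Convex ℝ Θ) (hΘint : (interior Θ).Nonempty) :
    IsClosed {θ ∈ Θ | ∃ μ ∈ MSet μ1X μ0X, ∫ p, (m1 (p.2.1, p.2.2)) θ + m2 p ∂μ = 0} ∧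
      Convex ℝ {θ ∈ Θ | ∃ μ ∈ MSet μ1X μ0X, ∫ p, (m1 (p.2.1, p.2.2)) θ + m2 p ∂μ = 0} := by
  classical
  have hπ1 : Continuous fun p : Y1 × Y0 × X => (p.1, p.2.2) :=
    continuous_fst.prodMk (continuous_snd.comp continuous_snd)
  have hπ0 : Continuous fun p : Y1 × Y0 × X => (p.2.1, p.2.2) :=
    (continuous_fst.comp continuous_snd).prodMk (continuous_snd.comp continuous_snd)
  have hm1θ : ∀ θ, Continuous fun q : Y0 × X => (m1 q) θ := fun θ =>
    (ContinuousLinearMap.apply ℝ (EuclideanSpace ℝ (Fin k)) θ).continuous.comp hm1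
  have hm1int : ∀ θ, Integrable (fun q : Y0 × X => (m1 q) θ) μ0X := fun θ =>
    integrable_of_continuous_compact (hm1θ θ) μ0X
  set cmap : EuclideanSpace ℝ (Fin dθ) →ₗ[ℝ] EuclideanSpace ℝ (Fin k) :=
    { toFun := fun θ => ∫ q, (m1 q) θ ∂μ0X
      map_add' := fun θ1 θ2 => by
        simp_rw [map_add]
        exact integral_add (hm1int θ1) (hm1int θ2)
      map_smul' := fun c θ => by
        simp_rw [ContinuousLinearMap.map_smul]
        rw [integral_smul]
        rfl } with hcmap
  have hcmapc : Continuous cmap := cmap.continuous_of_finiteDimensional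
  have key : ∀ (θ) (μ : Measure (Y1 × Y0 × X)), μ ∈ MSet μ1X μ0X →
      ∫ p, (m1 (p.2.1, p.2.2)) θ + m2 p ∂μ = cmap θ + ∫ p, m2 p ∂μ := by
    intro θ μ hμ
    haveI := hμ.1
    have hc1 : Continuous fun p : Y1 × Y0 × X => (m1 (p.2.1, p.2.2)) θ :=
      (hm1θ θ).comp hπ0
    have hint1 : Integrable (fun p : Y1 × Y0 × X => (m1 (p.2.1, p.2.2)) θ) μ :=
      integrable_of_continuous_compact hc1 μ
    have hint2 : Integrable m2 μ := integrable_of_continuous_compact hm2 μ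
    rw [integral_add hint1 hint2]
    congr 1
    calc ∫ p, (m1 (p.2.1, p.2.2)) θ ∂μ
        = ∫ q, (m1 q) θ ∂(μ.map fun p : Y1 × Y0 × X => (p.2.1, p.2.2)) := by
          rw [integral_map hπ0.measurable.aemeasurable ((hm1θ θ).aestronglyMeasurable)]
      _ = ∫ q, (m1 q) θ ∂μ0X := by rw [hμ.2.2]
      _ = cmap θ := rfl
  constructor
  · -- closedness
    set K : Set (ProbabilityMeasure (Y1 × Y0 × X)) :=
      {ν | ν.toMeasure.map (fun p => (p.1, p.2.2)) = μ1X} ∩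
      {ν | ν.toMeasure.map (fun p => (p.2.1, p.2.2)) = μ0X} with hK
    have hKclosed : IsClosed K :=
      (marginal_closed (fun p : Y1 × Y0 × X => (p.1, p.2.2)) hπ1 μ1X inferInstance).inter
        (marginal_closed (fun p : Y1 × Y0 × X => (p.2.1, p.2.2)) hπ0 μ0X inferInstance)
    have hKcompact : IsCompact K := hKclosed.isCompact
    have hccint : Continuous fun ν : ProbabilityMeasure (Y1 × Y0 × X) =>
        ∫ p, m2 p ∂ν.toMeasure := continuous_integral_vector hm2
    have hG : Continuous fun z : EuclideanSpace ℝ (Fin dθ) × ProbabilityMeasure (Y1 × Y0 × X) =>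
        cmap z.1 + ∫ p, m2 p ∂z.2.toMeasure :=
      (hcmapc.comp continuous_fst).add (hccint.comp continuous_snd)
    set S := (Θ ×ˢ K) ∩
      {z : EuclideanSpace ℝ (Fin dθ) × ProbabilityMeasure (Y1 × Y0 × X) |
        cmap z.1 + ∫ p, m2 p ∂z.2.toMeasure = 0} with hS
    have hScompact : IsCompact S :=
      (hΘcomp.prod hKcompact).inter_right (isClosed_eq hG continuous_const)
    have himg : IsCompact (Prod.fst '' S) := hScompact.image continuous_fst
    have hseteq : {θ ∈ Θ | ∃ μ ∈ MSet μ1X μ0X, ∫ p, (m1 (p.2.1, p.2.2)) θ + m2 p ∂μ = 0}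
        = Prod.fst '' S := by
      ext θ
      constructor
      · rintro ⟨hθ, μ, hμ, hintg⟩
        refine ⟨(θ, ⟨μ, hμ.1⟩), ⟨⟨hθ, hμ.2.1, hμ.2.2⟩, ?_⟩, rfl⟩
        show cmap θ + ∫ p, m2 p ∂μ = 0
        rw [← key θ μ hμ]
        exact hintg
      · rintro ⟨⟨θ', ν⟩, ⟨⟨hθ, hν1, hν0⟩, hzero⟩, rfl⟩
        have hνmem : ν.toMeasure ∈ MSet μ1X μ0X := ⟨ν.prop, hν1, hν0⟩
        refine ⟨hθ, ν.toMeasure, hνmem, ?_⟩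
        rw [key θ' ν.toMeasure hνmem]
        exact hzero
    rw [hseteq]
    exact himg.isClosed
  · -- convexity
    rintro θ1 ⟨hθ1, μ1, hμ1, h1⟩ θ2 ⟨hθ2, μ2, hμ2, h2⟩ a b ha hb hab
    haveI := hμ1.1
    haveI := hμ2.1
    refine ⟨hΘconv hθ1 hθ2 ha hb hab, ?_⟩
    set μ := (ENNReal.ofReal a) • μ1 + (ENNReal.ofReal b) • μ2 with hμdef
    have hsum_one : ENNReal.ofReal a + ENNReal.ofReal b = 1 := by
      rw [← ENNReal.ofReal_add ha hb, hab, ENNReal.ofReal_one]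
    have hprob : IsProbabilityMeasure μ := by
      constructor
      rw [hμdef]
      simp only [Measure.coe_add, Pi.add_apply, Measure.smul_apply,
        measure_univ, smul_eq_mul, mul_one]
      exact hsum_one
    have hmem : μ ∈ MSet μ1X μ0X := by
      refine ⟨hprob, ?_, ?_⟩
      · rw [hμdef, Measure.map_add _ _ hπ1.measurable, MeasureTheory.Measure.map_smul, MeasureTheory.Measure.map_smul,
          hμ1.2.1, hμ2.2.1, ← add_smul, hsum_one, one_smul]
      · rw [hμdef, Measure.map_add _ _ hπ0.measurable, MeasureTheory.Measure.map_smul, MeasureTheory.Measure.map_smul,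
          hμ1.2.2, hμ2.2.2, ← add_smul, hsum_one, one_smul]
    refine ⟨μ, hmem, ?_⟩
    rw [key _ μ hmem]
    have hc1 : cmap θ1 + ∫ p, m2 p ∂μ1 = 0 := by rw [← key θ1 μ1 hμ1]; exact h1
    have hc2 : cmap θ2 + ∫ p, m2 p ∂μ2 = 0 := by rw [← key θ2 μ2 hμ2]; exact h2
    have hintm2_1 : Integrable m2 μ1 := integrable_of_continuous_compact hm2 μ1
    have hintm2_2 : Integrable m2 μ2 := integrable_of_continuous_compact hm2 μ2
    have hμint : ∫ p, m2 p ∂μ = a • ∫ p, m2 p ∂μ1 + b • ∫ p, m2 p ∂μ2 := by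
      rw [hμdef, integral_add_measure (hintm2_1.smul_measure ENNReal.ofReal_ne_top)
        (hintm2_2.smul_measure ENNReal.ofReal_ne_top), integral_smul_measure,
        integral_smul_measure, ENNReal.toReal_ofReal ha, ENNReal.toReal_ofReal hb]
    have hcml : cmap (a • θ1 + b • θ2) = a • cmap θ1 + b • cmap θ2 := by
      rw [LinearMap.map_add, LinearMap.map_smul, LinearMap.map_smul]
    rw [hμint, hcml]
    calc a • cmap θ1 + b • cmap θ2 + (a • ∫ p, m2 p ∂μ1 + b • ∫ p, m2 p ∂μ2)
        = a • (cmap θ1 + ∫ p, m2 p ∂μ1) + b • (cmap θ2 + ∫ p, m2 p ∂μ2) := by module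
      _ = 0 := by rw [hc1, hc2]; simp
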